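/- arXiv:2206.14080 — 5 statements merged into one kernel-verified Lean document; each statement's English description precedes it below -/
import Mathlib

section
/- Let α be a Hurwitz integer whose norm N(α) = p is a prime number, and let z be an integer, identified with the quaternion z·1. Then there exists a Hurwitz integer λ with z = λ·α if and only if p divides z. -/
open Quaternion

noncomputable section

/-- Nearest-integer rounding: ties round up if `x ≤ 0`, down if `x > 0`. -/
def rndInt (x : ℚ) : ℤ := if x ≤ 0 then ⌊x + 1/2⌋ else ⌈x - 1/2⌉

/-- Nearest-half-integer rounding: ties round up if `x ≤ 0`, down if `x > 0`. -/
def rndHalf (x : ℚ) : ℚ := (rndInt (x - 1/2) : ℚ) + 1/2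

/-- The quaternion `a + b i + c j + d k` over `ℚ`. -/
def quat (a b c d : ℚ) : ℍ[ℚ] := ⟨a, b, c, d⟩

/-- Componentwise nearest-integer rounding of a quaternion. -/
def qRound (q : ℍ[ℚ]) : ℍ[ℚ] :=
  quat (rndInt q.re) (rndInt q.imI) (rndInt q.imJ) (rndInt q.imK)

/-- Componentwise nearest-half-integer rounding of a quaternion. -/
def qRoundHalf (q : ℍ[ℚ]) : ℍ[ℚ] :=
  quat (rndHalf q.re) (rndHalf q.imI) (rndHalf q.imJ) (rndHalf q.imK)

/-- A Hurwitz integer: all components in `ℤ`, or all components in `ℤ + 1/2`. -/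
def IsHurwitz (q : ℍ[ℚ]) : Prop :=
  ((∃ n : ℤ, q.re = n) ∧ (∃ n : ℤ, q.imI = n) ∧ (∃ n : ℤ, q.imJ = n) ∧ (∃ n : ℤ, q.imK = n)) ∨
  ((∃ n : ℤ, q.re = n + 1/2) ∧ (∃ n : ℤ, q.imI = n + 1/2) ∧ (∃ n : ℤ, q.imJ = n + 1/2) ∧
    (∃ n : ℤ, q.imK = n + 1/2))

/-- `μ⁽¹⁾_α(z) = z − α·⌊(ᾱ·z)/N(α)⌉`. -/
def mu1 (α : ℍ[ℚ]) (z : ℤ) : ℍ[ℚ] :=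
  (z : ℍ[ℚ]) - α * qRound ((star α * (z : ℍ[ℚ])) / ((normSq α : ℚ) : ℍ[ℚ]))

/-- `μ⁽²⁾_α(z) = z − α·⌊⌊(ᾱ·z)/N(α)⌉⌉`. -/
def mu2 (α : ℍ[ℚ]) (z : ℤ) : ℍ[ℚ] :=
  (z : ℍ[ℚ]) - α * qRoundHalf ((star α * (z : ℍ[ℚ])) / ((normSq α : ℚ) : ℍ[ℚ]))

/-- The two remainder maps, indexed by `Fin 2` (`0 ↦ μ⁽¹⁾`, `1 ↦ μ⁽²⁾`). -/
def mu (α : ℍ[ℚ]) (i : Fin 2) (z : ℤ) : ℍ[ℚ] :=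
  if i = 0 then mu1 α z else mu2 α z

/-- The four components of a quaternion. -/
def comp : Fin 4 → ℍ[ℚ] → ℚ
  | 0, q => q.re
  | 1, q => q.imI
  | 2, q => q.imJ
  | 3, q => q.imK

lemma hurwitz_normSq_int {q : ℍ[ℚ]} (h : IsHurwitz q) : ∃ k : ℤ, normSq q = k := by
  rcases h with ⟨⟨a,ha⟩,⟨b,hb⟩,⟨c,hc⟩,⟨d,hd⟩⟩ | ⟨⟨a,ha⟩,⟨b,hb⟩,⟨c,hc⟩,⟨d,hd⟩⟩
  · exact ⟨a^2+b^2+c^2+d^2, by rw [normSq_def', ha, hb, hc, hd]; push_cast; ring⟩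
  · exact ⟨a^2+a+b^2+b+c^2+c+d^2+d+1, by rw [normSq_def', ha, hb, hc, hd]; push_cast; ring⟩

lemma hurwitz_star {q : ℍ[ℚ]} (h : IsHurwitz q) : IsHurwitz (star q) := by
  rcases h with ⟨⟨a,ha⟩,⟨b,hb⟩,⟨c,hc⟩,⟨d,hd⟩⟩ | ⟨⟨a,ha⟩,⟨b,hb⟩,⟨c,hc⟩,⟨d,hd⟩⟩
  · exact Or.inl ⟨⟨a, by simp [ha]⟩, ⟨-b, by simp [hb]⟩, ⟨-c, by simp [hc]⟩, ⟨-d, by simp [hd]⟩⟩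
  · refine Or.inr ⟨⟨a, by simp [ha]⟩, ⟨-b-1, ?_⟩, ⟨-c-1, ?_⟩, ⟨-d-1, ?_⟩⟩ <;>
      simp [hb, hc, hd] <;> push_cast <;> ring

lemma hurwitz_int_mul {q : ℍ[ℚ]} (h : IsHurwitz q) (m : ℤ) : IsHurwitz ((m : ℍ[ℚ]) * q) := by
  have hre : ((m : ℍ[ℚ]) * q).re = m * q.re := by simp
  have hi : ((m : ℍ[ℚ]) * q).imI = m * q.imI := by simp
  have hj : ((m : ℍ[ℚ]) * q).imJ = m * q.imJ := by simp
  have hk : ((m : ℍ[ℚ]) * q).imK = m * q.imK := by simp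
  rcases h with ⟨⟨a,ha⟩,⟨b,hb⟩,⟨c,hc⟩,⟨d,hd⟩⟩ | ⟨⟨a,ha⟩,⟨b,hb⟩,⟨c,hc⟩,⟨d,hd⟩⟩
  · exact Or.inl ⟨⟨m*a, by rw [hre, ha]; push_cast; ring⟩, ⟨m*b, by rw [hi, hb]; push_cast; ring⟩,
      ⟨m*c, by rw [hj, hc]; push_cast; ring⟩, ⟨m*d, by rw [hk, hd]; push_cast; ring⟩⟩
  · rcases Int.even_or_odd m with ⟨t, ht⟩ | ⟨t, ht⟩
    · exact Or.inl ⟨⟨2*t*a+t, by rw [hre, ha, ht]; push_cast; ring⟩,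
        ⟨2*t*b+t, by rw [hi, hb, ht]; push_cast; ring⟩,
        ⟨2*t*c+t, by rw [hj, hc, ht]; push_cast; ring⟩,
        ⟨2*t*d+t, by rw [hk, hd, ht]; push_cast; ring⟩⟩
    · exact Or.inr ⟨⟨m*a+t, by rw [hre, ha, ht]; push_cast; ring⟩,
        ⟨m*b+t, by rw [hi, hb, ht]; push_cast; ring⟩,
        ⟨m*c+t, by rw [hj, hc, ht]; push_cast; ring⟩,
        ⟨m*d+t, by rw [hk, hd, ht]; push_cast; ring⟩⟩

theorem stmt_3 (α : ℍ[ℚ]) (hH : IsHurwitz α) (p : ℕ) (hp : p.Prime)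
    (hN : normSq α = (p : ℚ)) (z : ℤ) :
    (∃ lam : ℍ[ℚ], IsHurwitz lam ∧ (z : ℍ[ℚ]) = lam * α) ↔ (p : ℤ) ∣ z := by
  constructor
  · rintro ⟨lam, hlam, heq⟩
    obtain ⟨k, hk⟩ := hurwitz_normSq_int hlam
    have h1 : normSq ((z : ℤ) : ℍ[ℚ]) = normSq lam * normSq α := by rw [heq, map_mul]
    rw [normSq_intCast, hk, hN] at h1
    have h2 : z ^ 2 = k * p := by exact_mod_cast h1
    have hp' : Prime (p : ℤ) := Nat.prime_iff_prime_int.mp hp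
    refine hp'.dvd_of_dvd_pow (n := 2) ⟨k, by linarith [h2]⟩
  · rintro ⟨m, hm⟩
    refine ⟨(m : ℍ[ℚ]) * star α, hurwitz_int_mul (hurwitz_star hH) m, ?_⟩
    rw [mul_assoc, star_mul_self, hN]
    push_cast [hm]
    exact (Nat.cast_commute p _)
end
end

section
/- Let α be a prime Hurwitz integer with N(α) = p. Then the map z ↦ μ⁽¹⁾_α(z) = z − α·⌊(ᾱ·z)/p⌉ is injective on {0, 1, …, p−1}; consequently the set {μ⁽¹⁾_α(z) : z ∈ {0, …, p−1}} has exactly p elements. -/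
open Quaternion

noncomputable section

/-- `z ↦ μ⁽¹⁾_α(z)` is injective on `{0, 1, …, p−1}`, and its image there
has exactly `p` elements. -/
theorem stmt_4 (α : ℍ[ℚ]) (hH : IsHurwitz α) (p : ℕ) (hp : p.Prime)
    (hN : normSq α = (p : ℚ)) :
    Set.InjOn (fun z : ℤ => mu1 α z) (Set.Ico (0 : ℤ) (p : ℤ)) ∧
    ((fun z : ℤ => mu1 α z) '' Set.Ico (0 : ℤ) (p : ℤ)).ncard = p := by
  have hinj : Set.InjOn (fun z : ℤ => mu1 α z) (Set.Ico (0 : ℤ) (p : ℤ)) := by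
    intro z₁ h₁ z₂ h₂ heq
    simp only [Set.mem_Ico] at h₁ h₂
    simp only [mu1] at heq
    set x₁ := (star α * ((z₁ : ℤ) : ℍ[ℚ])) / ((normSq α : ℚ) : ℍ[ℚ]) with hx₁
    set x₂ := (star α * ((z₂ : ℤ) : ℍ[ℚ])) / ((normSq α : ℚ) : ℍ[ℚ]) with hx₂
    set r₁ := qRound x₁ with hr₁
    set r₂ := qRound x₂ with hr₂
    have key : ((z₁ : ℍ[ℚ]) - (z₂ : ℍ[ℚ])) = α * (r₁ - r₂) := by
      rw [sub_eq_sub_iff_sub_eq_sub] at heq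
      rw [mul_sub, ← heq]
    have h2 := congrArg normSq key
    rw [map_mul, hN] at h2
    have hL : normSq ((z₁ : ℍ[ℚ]) - (z₂ : ℍ[ℚ])) = (((z₁ - z₂)^2 : ℤ) : ℚ) := by
      rw [Quaternion.normSq_def']
      simp
    rw [hL] at h2
    have habcd : normSq (r₁ - r₂) =
        (((rndInt x₁.re - rndInt x₂.re)^2 + (rndInt x₁.imI - rndInt x₂.imI)^2 +
          (rndInt x₁.imJ - rndInt x₂.imJ)^2 + (rndInt x₁.imK - rndInt x₂.imK)^2 : ℤ) : ℚ) := by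
      rw [Quaternion.normSq_def']
      simp [hr₁, hr₂, qRound, quat]
      rfl
    rw [habcd] at h2
    have h3 : (z₁ - z₂)^2 = (p : ℤ) *
        ((rndInt x₁.re - rndInt x₂.re)^2 + (rndInt x₁.imI - rndInt x₂.imI)^2 +
          (rndInt x₁.imJ - rndInt x₂.imJ)^2 + (rndInt x₁.imK - rndInt x₂.imK)^2) := by
      exact_mod_cast h2
    have hpz : Prime (p : ℤ) := Nat.prime_iff_prime_int.mp hp
    have hdvd : (p : ℤ) ∣ (z₁ - z₂) := hpz.dvd_of_dvd_pow (n := 2) ⟨_, h3⟩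
    have hz : z₁ - z₂ = 0 := Int.eq_zero_of_abs_lt_dvd hdvd (by
      rw [abs_sub_lt_iff]; omega)
    omega
  refine ⟨hinj, ?_⟩
  rw [Set.ncard_image_of_injOn hinj,
    show Set.Ico (0 : ℤ) (p : ℤ) = ↑(Finset.Ico (0 : ℤ) (p : ℤ)) by simp,
    Set.ncard_coe_finset]
  simp
end
end

section
/- Let α = α₁ + α₂i + α₃j + α₄k be a prime Hurwitz integer all of whose components α₁, α₂, α₃, α₄ lie in ℤ. Then μ⁽¹⁾_α(N(α)) = N(α) − α·⌊ᾱ⌉ = 0, and there exists a Hurwitz integer λ (all of whose components are ±1/2) with μ⁽²⁾_α(N(α)) = N(α) − α·⌊⌊ᾱ⌉⌉ = α·λ, so that μ⁽²⁾_α(N(α)) ≡ 0 (mod α). -/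
open Quaternion

noncomputable section

lemma rndInt_intCast (n : ℤ) : rndInt (n : ℚ) = n := by
  unfold rndInt
  split
  · rw [show ((n:ℚ) + 1/2) = (1/2 : ℚ) + n by ring, Int.floor_add_intCast]
    norm_num
  · rw [show ((n:ℚ) - 1/2) = (-(1/2) : ℚ) + n by ring, Int.ceil_add_intCast]
    norm_num

lemma rndHalf_intCast (n : ℤ) :
    rndHalf (n : ℚ) = (n : ℚ) + (if (n:ℚ) - 1/2 ≤ 0 then (1/2 : ℚ) else -1/2) := by
  unfold rndHalf rndInt
  split_ifs with h
  · rw [sub_add_cancel, Int.floor_intCast]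
  · rw [show ((n:ℚ) - 1/2 - 1/2) = ((n - 1 : ℤ) : ℚ) by push_cast; ring, Int.ceil_intCast]
    push_cast; ring

lemma ex_half {x : ℚ} (h : x = 1/2 ∨ x = -1/2) : ∃ n : ℤ, x = n + 1/2 := by
  rcases h with h | h
  · exact ⟨0, by rw [h]; norm_num⟩
  · exact ⟨-1, by rw [h]; push_cast; norm_num⟩

/-- for a prime Hurwitz integer `α` with integer components,
`μ⁽¹⁾_α(N(α)) = N(α) − α·⌊ᾱ⌉ = 0`, and `μ⁽²⁾_α(N(α)) = N(α) − α·⌊⌊ᾱ⌉⌉ = α·λ` for some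
Hurwitz integer `λ` all of whose components are `±1/2`. -/
theorem stmt_13 (α : ℍ[ℚ])
    (hc : (∃ n : ℤ, α.re = n) ∧ (∃ n : ℤ, α.imI = n) ∧ (∃ n : ℤ, α.imJ = n) ∧
      (∃ n : ℤ, α.imK = n))
    (p : ℕ) (hp : p.Prime) (hN : normSq α = (p : ℚ)) :
    mu1 α (p : ℤ) = ((p : ℤ) : ℍ[ℚ]) - α * qRound (star α) ∧
    mu1 α (p : ℤ) = 0 ∧
    mu2 α (p : ℤ) = ((p : ℤ) : ℍ[ℚ]) - α * qRoundHalf (star α) ∧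
    ∃ lam : ℍ[ℚ], IsHurwitz lam ∧
      (∀ c : Fin 4, comp c lam = 1/2 ∨ comp c lam = -1/2) ∧
      mu2 α (p : ℤ) = α * lam := by
  obtain ⟨⟨a, ha⟩, ⟨b, hb⟩, ⟨c, hc2⟩, ⟨d, hd⟩⟩ := hc
  have hpq : ((p : ℤ) : ℍ[ℚ]) = ((p : ℚ) : ℍ[ℚ]) := by push_cast; rfl
  have hpq0 : (p : ℚ) ≠ 0 := Nat.cast_ne_zero.mpr hp.ne_zero
  have hp0 : ((p : ℚ) : ℍ[ℚ]) ≠ 0 := fun h =>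
    hpq0 (Quaternion.coe_injective (h.trans Quaternion.coe_zero.symm))
  have hdiv : (star α * ((p : ℤ) : ℍ[ℚ])) / ((normSq α : ℚ) : ℍ[ℚ]) = star α := by
    rw [hN, hpq, mul_div_cancel_right₀ _ hp0]
  have hmul : α * star α = ((p : ℚ) : ℍ[ℚ]) := by
    rw [← hN]; exact_mod_cast Quaternion.self_mul_star α
  have hsre : (star α).re = ((a : ℤ) : ℚ) := by simp [ha]
  have hsi : (star α).imI = ((-b : ℤ) : ℚ) := by simp [hb]
  have hsj : (star α).imJ = ((-c : ℤ) : ℚ) := by simp [hc2]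
  have hsk : (star α).imK = ((-d : ℤ) : ℚ) := by simp [hd]
  have hqr : qRound (star α) = star α := by
    ext
    · show rndInt (star α).re = (star α).re
      rw [hsre, rndInt_intCast]
    · show ((rndInt (star α).imI : ℚ)) = (star α).imI
      rw [hsi, rndInt_intCast]
    · show ((rndInt (star α).imJ : ℚ)) = (star α).imJ
      rw [hsj, rndInt_intCast]
    · show ((rndInt (star α).imK : ℚ)) = (star α).imK
      rw [hsk, rndInt_intCast]
  -- the half-rounding shift
  set s : ℚ → ℚ := fun x => if x - 1/2 ≤ 0 then (1/2 : ℚ) else -1/2 with hs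
  have hsval : ∀ x : ℚ, s x = 1/2 ∨ s x = -1/2 := by
    intro x; simp only [hs]
    split_ifs with h
    · left; rfl
    · right; rfl
  have hneg : ∀ x : ℚ, (x = 1/2 ∨ x = -1/2) → (-x = 1/2 ∨ -x = -1/2) := by
    rintro x (h | h)
    · right; rw [h]; norm_num
    · left; rw [h]; norm_num
  set δ : ℍ[ℚ] := quat (s (star α).re) (s (star α).imI) (s (star α).imJ) (s (star α).imK)
    with hδ
  have hqrh : qRoundHalf (star α) = star α + δ := by
    ext
    · show rndHalf (star α).re = (star α).re + s (star α).re
      rw [hsre, rndHalf_intCast]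
    · show rndHalf (star α).imI = (star α).imI + s (star α).imI
      rw [hsi, rndHalf_intCast]
    · show rndHalf (star α).imJ = (star α).imJ + s (star α).imJ
      rw [hsj, rndHalf_intCast]
    · show rndHalf (star α).imK = (star α).imK + s (star α).imK
      rw [hsk, rndHalf_intCast]
  refine ⟨?_, ?_, ?_, ?_⟩
  · unfold mu1; rw [hdiv]
  · unfold mu1
    rw [hdiv, hqr, hmul, hpq, sub_self]
  · unfold mu2; rw [hdiv]
  · refine ⟨-δ, ?_, ?_, ?_⟩
    · refine Or.inr ⟨?_, ?_, ?_, ?_⟩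
      · exact ex_half (hneg _ (hsval (star α).re))
      · exact ex_half (hneg _ (hsval (star α).imI))
      · exact ex_half (hneg _ (hsval (star α).imJ))
      · exact ex_half (hneg _ (hsval (star α).imK))
    · intro i
      fin_cases i
      · exact hneg _ (hsval (star α).re)
      · exact hneg _ (hsval (star α).imI)
      · exact hneg _ (hsval (star α).imJ)
      · exact hneg _ (hsval (star α).imK)
    · unfold mu2
      rw [hdiv, hqrh, mul_add, hmul, hpq, mul_neg]
      abel
end
end

section
/- Let α = α₁ + α₂i + α₃j + α₄k be a prime Hurwitz integer all of whose components α₁, α₂, α₃, α₄ lie in ℤ + 1/2. Then μ⁽²⁾_α(N(α)) = N(α) − α·⌊⌊ᾱ⌉⌉ = 0, and there exists a Hurwitz integer λ (all of whose components are ±1/2) with μ⁽¹⁾_α(N(α)) = N(α) − α·⌊ᾱ⌉ = α·λ, so that μ⁽¹⁾_α(N(α)) ≡ 0 (mod α). -/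
open Quaternion

noncomputable section

lemma rndInt_int (n : ℤ) : rndInt (n:ℚ) = n := by
  unfold rndInt
  split
  · exact Int.floor_eq_iff.2 ⟨by linarith, by linarith⟩
  · exact Int.ceil_eq_iff.2 ⟨by linarith, by linarith⟩

lemma rndHalf_half (n : ℤ) : rndHalf ((n:ℚ) + 1/2) = (n:ℚ) + 1/2 := by
  unfold rndHalf
  rw [show ((n:ℚ) + 1/2 - 1/2) = (n:ℚ) by ring, rndInt_int]

lemma rndInt_half (n : ℤ) : ((n:ℚ) + 1/2) - (rndInt ((n:ℚ)+1/2) : ℚ) = 1/2 ∨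
    ((n:ℚ) + 1/2) - (rndInt ((n:ℚ)+1/2) : ℚ) = -(1/2) := by
  unfold rndInt
  split
  · right
    have h : ⌊(n:ℚ) + 1/2 + 1/2⌋ = n + 1 := by
      rw [show ((n:ℚ) + 1/2 + 1/2) = ((n+1 : ℤ):ℚ) by push_cast; ring, Int.floor_intCast]
    rw [h]; push_cast; ring
  · left
    have h : ⌈(n:ℚ) + 1/2 - 1/2⌉ = n := by
      rw [show ((n:ℚ) + 1/2 - 1/2) = ((n : ℤ):ℚ) by push_cast; ring, Int.ceil_intCast]
    rw [h]; ring

lemma half_mem (x : ℚ) (h : x = 1/2 ∨ x = -(1/2)) : ∃ n : ℤ, x = n + 1/2 := by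
  rcases h with h | h
  · exact ⟨0, by rw [h]; norm_num⟩
  · exact ⟨-1, by rw [h]; push_cast; norm_num⟩

/-- for a prime Hurwitz integer `α` with half-integer components,
`μ⁽²⁾_α(N(α)) = N(α) − α·⌊⌊ᾱ⌉⌉ = 0`, and `μ⁽¹⁾_α(N(α)) = N(α) − α·⌊ᾱ⌉ = α·λ` for some
Hurwitz integer `λ` all of whose components are `±1/2`. -/
theorem stmt_14 (α : ℍ[ℚ])
    (hc : (∃ n : ℤ, α.re = n + 1/2) ∧ (∃ n : ℤ, α.imI = n + 1/2) ∧
      (∃ n : ℤ, α.imJ = n + 1/2) ∧ (∃ n : ℤ, α.imK = n + 1/2))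
    (p : ℕ) (hp : p.Prime) (hN : normSq α = (p : ℚ)) :
    mu2 α (p : ℤ) = ((p : ℤ) : ℍ[ℚ]) - α * qRoundHalf (star α) ∧
    mu2 α (p : ℤ) = 0 ∧
    mu1 α (p : ℤ) = ((p : ℤ) : ℍ[ℚ]) - α * qRound (star α) ∧
    ∃ lam : ℍ[ℚ], IsHurwitz lam ∧
      (∀ c : Fin 4, comp c lam = 1/2 ∨ comp c lam = -1/2) ∧
      mu1 α (p : ℤ) = α * lam := by
  obtain ⟨⟨n1, h1⟩, ⟨n2, h2⟩, ⟨n3, h3⟩, ⟨n4, h4⟩⟩ := hc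
  have hpq : (((p:ℤ)):ℍ[ℚ]) = ((p:ℚ):ℍ[ℚ]) := by
    rw [← Quaternion.coe_intCast]
    exact congrArg _ (by push_cast; ring)
  have hpne : ((p:ℚ):ℍ[ℚ]) ≠ 0 := by
    intro h
    have hre0 := congrArg QuaternionAlgebra.re h
    simp only [Quaternion.re_coe, Quaternion.re_zero] at hre0
    exact hp.ne_zero (Nat.cast_eq_zero.mp hre0)
  have key : (star α * (((p:ℤ)):ℍ[ℚ])) / ((normSq α : ℚ) : ℍ[ℚ]) = star α := by
    rw [hN, hpq, mul_div_assoc, div_self hpne, mul_one]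
  have hps : α * star α = (((p:ℤ)):ℍ[ℚ]) := by
    rw [self_mul_star, hN]
    ext <;> simp
  have hsre : (star α).re = (n1:ℚ) + 1/2 := by rw [re_star, h1]
  have hsimI : (star α).imI = ((-n2-1 : ℤ):ℚ) + 1/2 := by rw [imI_star, h2]; push_cast; ring
  have hsimJ : (star α).imJ = ((-n3-1 : ℤ):ℚ) + 1/2 := by rw [imJ_star, h3]; push_cast; ring
  have hsimK : (star α).imK = ((-n4-1 : ℤ):ℚ) + 1/2 := by rw [imK_star, h4]; push_cast; ring
  have hrhalf : qRoundHalf (star α) = star α := by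
    ext <;> simp only [qRoundHalf, quat, hsre, hsimI, hsimJ, hsimK, rndHalf_half]
  refine ⟨by rw [mu2, key], ?_, by rw [mu1, key], ?_⟩
  · rw [mu2, key, hrhalf, hps, sub_self]
  · set lam : ℍ[ℚ] := star α - qRound (star α) with hlam
    have hre : lam.re = 1/2 ∨ lam.re = -(1/2) := by
      have := rndInt_half n1
      rw [hlam, Quaternion.re_sub]
      simpa [qRound, quat, hsre] using this
    have himI : lam.imI = 1/2 ∨ lam.imI = -(1/2) := by
      have := rndInt_half (-n2-1)
      rw [hlam, Quaternion.imI_sub]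
      simpa [qRound, quat, hsimI] using this
    have himJ : lam.imJ = 1/2 ∨ lam.imJ = -(1/2) := by
      have := rndInt_half (-n3-1)
      rw [hlam, Quaternion.imJ_sub]
      simpa [qRound, quat, hsimJ] using this
    have himK : lam.imK = 1/2 ∨ lam.imK = -(1/2) := by
      have := rndInt_half (-n4-1)
      rw [hlam, Quaternion.imK_sub]
      simpa [qRound, quat, hsimK] using this
    refine ⟨lam, Or.inr ⟨half_mem _ hre, half_mem _ himI, half_mem _ himJ, half_mem _ himK⟩,
      ?_, ?_⟩
    · intro c
      fin_cases c
      · rcases hre with h | h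
        · exact Or.inl h
        · refine Or.inr ?_; show lam.re = -1/2; rw [h]; norm_num
      · rcases himI with h | h
        · exact Or.inl h
        · refine Or.inr ?_; show lam.imI = -1/2; rw [h]; norm_num
      · rcases himJ with h | h
        · exact Or.inl h
        · refine Or.inr ?_; show lam.imJ = -1/2; rw [h]; norm_num
      · rcases himK with h | h
        · exact Or.inl h
        · refine Or.inr ?_; show lam.imK = -1/2; rw [h]; norm_num
    · rw [mu1, key, hlam, mul_sub, hps]
end
end

section
/- Let α be a prime Hurwitz integer, let z ∈ ℤ, and let i, j ∈ {1, 2}. Then there exists a Hurwitz integer λ with μ⁽ⁱ⁾_α(z) + μ⁽ʲ⁾_α(N(α) − z) = α·λ; that is, μ_α(z) + μ_α(N(α) − z) ≡ 0 (mod α) for any of the choices of remainder map μ⁽¹⁾, μ⁽²⁾. -/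
open Quaternion

noncomputable section

lemma hurwitz_sub {a b : ℍ[ℚ]} (ha : IsHurwitz a) (hb : IsHurwitz b) :
    IsHurwitz (a - b) := by
  rcases ha with ⟨⟨m1,h1⟩,⟨m2,h2⟩,⟨m3,h3⟩,⟨m4,h4⟩⟩ | ⟨⟨m1,h1⟩,⟨m2,h2⟩,⟨m3,h3⟩,⟨m4,h4⟩⟩ <;>
  rcases hb with ⟨⟨n1,g1⟩,⟨n2,g2⟩,⟨n3,g3⟩,⟨n4,g4⟩⟩ | ⟨⟨n1,g1⟩,⟨n2,g2⟩,⟨n3,g3⟩,⟨n4,g4⟩⟩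
  · exact Or.inl ⟨⟨m1-n1, by simp only [Quaternion.re_sub, h1, g1]; push_cast; ring⟩, ⟨m2-n2, by simp only [Quaternion.imI_sub, h2, g2]; push_cast; ring⟩,
      ⟨m3-n3, by simp only [Quaternion.imJ_sub, h3, g3]; push_cast; ring⟩, ⟨m4-n4, by simp only [Quaternion.imK_sub, h4, g4]; push_cast; ring⟩⟩
  · exact Or.inr ⟨⟨m1-n1-1, by simp only [Quaternion.re_sub, h1, g1]; push_cast; ring⟩,
      ⟨m2-n2-1, by simp only [Quaternion.imI_sub, h2, g2]; push_cast; ring⟩,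
      ⟨m3-n3-1, by simp only [Quaternion.imJ_sub, h3, g3]; push_cast; ring⟩,
      ⟨m4-n4-1, by simp only [Quaternion.imK_sub, h4, g4]; push_cast; ring⟩⟩
  · exact Or.inr ⟨⟨m1-n1, by simp only [Quaternion.re_sub, h1, g1]; push_cast; ring⟩,
      ⟨m2-n2, by simp only [Quaternion.imI_sub, h2, g2]; push_cast; ring⟩,
      ⟨m3-n3, by simp only [Quaternion.imJ_sub, h3, g3]; push_cast; ring⟩,
      ⟨m4-n4, by simp only [Quaternion.imK_sub, h4, g4]; push_cast; ring⟩⟩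
  · exact Or.inl ⟨⟨m1-n1, by simp only [Quaternion.re_sub, h1, g1]; push_cast; ring⟩,
      ⟨m2-n2, by simp only [Quaternion.imI_sub, h2, g2]; push_cast; ring⟩,
      ⟨m3-n3, by simp only [Quaternion.imJ_sub, h3, g3]; push_cast; ring⟩,
      ⟨m4-n4, by simp only [Quaternion.imK_sub, h4, g4]; push_cast; ring⟩⟩

lemma hurwitz_star_s15 {a : ℍ[ℚ]} (ha : IsHurwitz a) : IsHurwitz (star a) := by
  rcases ha with ⟨⟨m1,h1⟩,⟨m2,h2⟩,⟨m3,h3⟩,⟨m4,h4⟩⟩ | ⟨⟨m1,h1⟩,⟨m2,h2⟩,⟨m3,h3⟩,⟨m4,h4⟩⟩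
  · exact Or.inl ⟨⟨m1, by simp [h1]⟩, ⟨-m2, by simp [h2]⟩,
      ⟨-m3, by simp [h3]⟩, ⟨-m4, by simp [h4]⟩⟩
  · exact Or.inr ⟨⟨m1, by simp [h1]⟩, ⟨-m2-1, by simp [h2]; push_cast; ring⟩,
      ⟨-m3-1, by simp [h3]; push_cast; ring⟩, ⟨-m4-1, by simp [h4]; push_cast; ring⟩⟩

lemma hurwitz_qRound (q : ℍ[ℚ]) : IsHurwitz (qRound q) :=
  Or.inl ⟨⟨_, rfl⟩, ⟨_, rfl⟩, ⟨_, rfl⟩, ⟨_, rfl⟩⟩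

lemma hurwitz_qRoundHalf (q : ℍ[ℚ]) : IsHurwitz (qRoundHalf q) :=
  Or.inr ⟨⟨_, rfl⟩, ⟨_, rfl⟩, ⟨_, rfl⟩, ⟨_, rfl⟩⟩

lemma mu_form (α : ℍ[ℚ]) (i : Fin 2) (z : ℤ) :
    ∃ r : ℍ[ℚ], IsHurwitz r ∧ mu α i z = (z : ℍ[ℚ]) - α * r := by
  by_cases h : i = 0
  · exact ⟨_, hurwitz_qRound _, by simp only [mu, if_pos h]; rfl⟩
  · exact ⟨_, hurwitz_qRoundHalf _, by simp only [mu, if_neg h]; rfl⟩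

/-- `μ_α(z) + μ_α(N(α) − z) ≡ 0 (mod α)` for any of the choices of remainder
map `μ⁽¹⁾, μ⁽²⁾`. -/
theorem stmt_15 (α : ℍ[ℚ]) (hH : IsHurwitz α) (p : ℕ) (hp : p.Prime)
    (hN : normSq α = (p : ℚ)) (z : ℤ) (i j : Fin 2) :
    ∃ lam : ℍ[ℚ], IsHurwitz lam ∧ mu α i z + mu α j ((p : ℤ) - z) = α * lam := by
  obtain ⟨r1, hr1, e1⟩ := mu_form α i z
  obtain ⟨r2, hr2, e2⟩ := mu_form α j ((p : ℤ) - z)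
  refine ⟨star α - r1 - r2, hurwitz_sub (hurwitz_sub (hurwitz_star_s15 hH) hr1) hr2, ?_⟩
  have hps : α * star α = ((p : ℚ) : ℍ[ℚ]) := by
    rw [← hN]; exact_mod_cast (Quaternion.self_mul_star α)
  rw [e1, e2]
  push_cast
  rw [mul_sub, mul_sub, hps]
  push_cast
  abel
end
end
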